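/- In any connected threshold graph G, every second-order stationary point θ of the Kuramoto energy E_G is a synchronous state: (cos θ_i, sin θ_i) = (cos θ_j, sin θ_j) for all vertices i, j. -/

import Mathlib

open Real Classical

noncomputable section

/-- Real-valued adjacency indicator of a simple graph. -/
def adjW {V : Type*} (G : SimpleGraph V) (i j : V) : ℝ := if G.Adj i j then 1 else 0

/-- The phasor (unit vector in the plane) associated with an angle. -/
def phasor (t : ℝ) : ℝ × ℝ := (Real.cos t, Real.sin t)

/-- The Kuramoto energy. -/
def kEnergy {V : Type*} [Fintype V] (G : SimpleGraph V) (θ : V → ℝ) : ℝ :=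
  (1 / 2) * ∑ i, ∑ j, adjW G i j * (1 - Real.cos (θ i - θ j))

/-- The Hessian of the Kuramoto energy. -/
def kHess {V : Type*} [Fintype V] (G : SimpleGraph V) (θ : V → ℝ) : Matrix V V ℝ :=
  fun i j =>
    if i = j then ∑ k, adjW G i k * Real.cos (θ i - θ k)
    else -(adjW G i j * Real.cos (θ i - θ j))

/-- First-order (equilibrium) condition of the homogeneous Kuramoto model. -/
def IsEquilibrium {V : Type*} [Fintype V] (G : SimpleGraph V) (θ : V → ℝ) : Prop :=
  ∀ i, ∑ j, adjW G i j * Real.sin (θ j - θ i) = 0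

/-- Second-order stationary point of the Kuramoto energy. -/
def IsSOSP {V : Type*} [Fintype V] (G : SimpleGraph V) (θ : V → ℝ) : Prop :=
  IsEquilibrium G θ ∧ (kHess G θ).PosSemidef

/-- The threshold graph on `Fin n` generated by the bit sequence `b`:
vertices are added in order `0, 1, …, n-1`, and vertex `i ≥ 1` is adjacent to all
earlier vertices iff `b i = true` (dominating) and to none iff `b i = false`
(isolated).  Hence two distinct vertices are adjacent iff the later one is
dominating.  (The bit `b 0` of the initial vertex is irrelevant.) -/
def thresholdGraph (n : ℕ) (b : Fin n → Bool) : SimpleGraph (Fin n) where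
  Adj u v := u ≠ v ∧ b (max u v) = true
  symm := by
    constructor
    intro u v h
    exact ⟨h.1.symm, by rw [max_comm]; exact h.2⟩
  loopless := by
    constructor
    intro u h
    exact h.1 rfl

private lemma quad_nonneg' {V : Type*} [Fintype V] {M : Matrix V V ℝ}
    (h : M.PosSemidef) (v : V → ℝ) :
    0 ≤ ∑ i, ∑ j, v i * (M i j * v j) := by
  have h2 := h.dotProduct_mulVec_nonneg v
  have e : dotProduct (star v) (M.mulVec v) = ∑ i, ∑ j, v i * (M i j * v j) := by
    simp [dotProduct, Matrix.mulVec, Finset.mul_sum]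
  rwa [e] at h2

private lemma unify' (p q ca sa cb sb : ℝ) (hp : 0 ≤ p) (hq : 0 < q)
    (ha : sa ^ 2 + ca ^ 2 = 1) (hb : sb ^ 2 + cb ^ 2 = 1)
    (e1 : p * ca = q * cb) (e2 : p * sa = q * sb) : ca = cb ∧ sa = sb := by
  have h2 : p ^ 2 = q ^ 2 := by
    linear_combination (p * sa + q * sb) * e2 + (p * ca + q * cb) * e1 - p ^ 2 * ha + q ^ 2 * hb
  have h3 : (p - q) * (p + q) = 0 := by linear_combination h2
  have hpq : p = q := by
    rcases mul_eq_zero.mp h3 with h | h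
    · linarith
    · linarith
  subst hpq
  exact ⟨mul_left_cancel₀ hq.ne' e1, mul_left_cancel₀ hq.ne' e2⟩

/-- adjacency value of the threshold graph -/
private lemma tg_val {n : ℕ} (b : Fin n → Bool) (i j : Fin n) :
    adjW (thresholdGraph n b) i j = if (i ≠ j ∧ b (max i j) = true) then 1 else 0 := by
  simp only [adjW]
  exact if_congr Iff.rfl rfl rfl

private lemma tg_lt {n : ℕ} (b : Fin n → Bool) {i j : Fin n} (h : i < j) :
    adjW (thresholdGraph n b) i j = if b j = true then 1 else 0 := by
  rw [tg_val, max_eq_right h.le]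
  simp [h.ne]

private lemma tg_gt {n : ℕ} (b : Fin n → Bool) {i j : Fin n} (h : j < i) :
    adjW (thresholdGraph n b) i j = if b i = true then 1 else 0 := by
  rw [tg_val, max_eq_left h.le]
  simp [h.ne']

private lemma tg_diag {n : ℕ} (b : Fin n → Bool) (i : Fin n) :
    adjW (thresholdGraph n b) i i = 0 := by
  rw [tg_val]; simp

/-- From the equilibrium condition: the neighbour phasor sum is aligned. -/
private lemma align {V : Type*} [Fintype V] (G : SimpleGraph V) (θ : V → ℝ)
    (hE : IsEquilibrium G θ) (i : V) :
    (∑ j, adjW G i j * Real.cos (θ j))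
      = (∑ j, adjW G i j * Real.cos (θ i - θ j)) * Real.cos (θ i) ∧
    (∑ j, adjW G i j * Real.sin (θ j))
      = (∑ j, adjW G i j * Real.cos (θ i - θ j)) * Real.sin (θ i) := by
  have hE' := hE i
  set X := ∑ j, adjW G i j * Real.cos (θ j) with hX
  set Y := ∑ j, adjW G i j * Real.sin (θ j) with hY
  have h1 : Real.cos (θ i) * Y - Real.sin (θ i) * X = 0 := by
    rw [← hE']
    rw [hX, hY, Finset.mul_sum, Finset.mul_sum, ← Finset.sum_sub_distrib]
    apply Finset.sum_congr rfl
    intro j _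
    rw [Real.sin_sub]
    ring
  have h2 : (∑ j, adjW G i j * Real.cos (θ i - θ j))
      = Real.cos (θ i) * X + Real.sin (θ i) * Y := by
    rw [hX, hY, Finset.mul_sum, Finset.mul_sum, ← Finset.sum_add_distrib]
    apply Finset.sum_congr rfl
    intro j _
    rw [Real.cos_sub]
    ring
  have hsc := Real.sin_sq_add_cos_sq (θ i)
  constructor
  · rw [h2]; linear_combination (-Real.sin (θ i)) * h1 - X * hsc
  · rw [h2]; linear_combination (Real.cos (θ i)) * h1 - Y * hsc

private lemma sum_split {n : ℕ} (k : Fin n) (g : Fin n → ℝ) :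
    ∑ j, g j = (∑ j ∈ Finset.univ.filter (fun j => j ≤ k), g j)
      + ∑ j ∈ Finset.univ.filter (fun j => k < j), g j := by
  rw [← Finset.sum_filter_add_sum_filter_not Finset.univ (fun j => j ≤ k) g]
  congr 1
  apply Finset.sum_congr _ (fun _ _ => rfl)
  apply Finset.filter_congr
  intro j _
  simp [not_le]

theorem connected_threshold_graph_sosp_synchronous
    (n : ℕ) (b : Fin n → Bool)
    (hconn : (thresholdGraph n b).Connected)
    (θ : Fin n → ℝ) (hsosp : IsSOSP (thresholdGraph n b) θ) :
    ∀ i j, phasor (θ i) = phasor (θ j) := by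
  obtain _ | (_ | m) := n
  · intro i
    exact i.elim0
  · intro i j
    have hij : i = j := Fin.ext (by have := i.isLt; have := j.isLt; omega)
    rw [hij]
  · -- n = m + 2
    set w : Fin (m + 2) := Fin.last (m + 1) with hwdef
    have hwval : ((w : Fin (m + 2)) : ℕ) = m + 1 := rfl
    -- the last vertex is dominating
    have hbw : b w = true := by
      obtain ⟨p⟩ := hconn.preconnected w 0
      have hne : w ≠ (0 : Fin (m + 2)) := by
        intro h0
        rw [h0] at hwval
        simp at hwval
      have hadj := p.adj_snd (SimpleGraph.Walk.not_nil_of_ne hne)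
      have h2 := hadj.2
      rwa [max_eq_left (Fin.le_last _)] at h2
    set A : Fin (m + 2) → Fin (m + 2) → ℝ := adjW (thresholdGraph (m + 2) b) with hA
    set c : Fin (m + 2) → ℝ := fun i => ∑ j, A i j * Real.cos (θ i - θ j) with hc
    have hEq : IsEquilibrium (thresholdGraph (m + 2) b) θ := hsosp.1
    have hPSD := hsosp.2
    have hHdiag : ∀ i, kHess (thresholdGraph (m + 2) b) θ i i = c i := by
      intro i
      simp [kHess, hc, hA]
    have hHoff : ∀ i j, i ≠ j → kHess (thresholdGraph (m + 2) b) θ i j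
        = -(A i j * Real.cos (θ i - θ j)) := by
      intro i j hij
      simp [kHess, hA, hij]
    -- diagonal of the Hessian is nonnegative
    have hcnn : ∀ i, 0 ≤ c i := by
      intro i
      have h : (0:ℝ) ≤ ∑ i', ∑ j, (if i' = i then (1:ℝ) else 0) *
          (kHess (thresholdGraph (m + 2) b) θ i' j * (if j = i then (1:ℝ) else 0)) :=
        quad_nonneg' hPSD (fun j => if j = i then (1:ℝ) else 0)
      have e : (∑ i', ∑ j, (if i' = i then (1:ℝ) else 0) *
          (kHess (thresholdGraph (m + 2) b) θ i' j * (if j = i then (1:ℝ) else 0)))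
          = kHess (thresholdGraph (m + 2) b) θ i i := by
        rw [Finset.sum_eq_single_of_mem i (Finset.mem_univ i)]
        · rw [Finset.sum_eq_single_of_mem i (Finset.mem_univ i)]
          · simp
          · intro j _ hj; simp [hj]
        · intro i' _ hi'
          simp [hi']
      rw [e, hHdiag i] at h
      exact h
    -- alignment, in `A`/`c` notation
    have halign : ∀ i, ((∑ j, A i j * Real.cos (θ j)) = c i * Real.cos (θ i)) ∧
        ((∑ j, A i j * Real.sin (θ j)) = c i * Real.sin (θ i)) := by
      intro i
      have h := align (thresholdGraph (m + 2) b) θ hEq i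
      rw [hA, hc]
      simpa using h
    -- the last row of adjacency
    have hAw : ∀ j : Fin (m + 2), A w j = if j = w then 0 else 1 := by
      intro j
      by_cases hj : j = w
      · rw [if_pos hj, hj, hA]; exact tg_diag b w
      · rw [if_neg hj, hA, tg_gt b (lt_of_le_of_ne (Fin.le_last j) hj), if_pos hbw]
    -- total phasor sums
    have htotc : (∑ j, Real.cos (θ j)) = (1 + c w) * Real.cos (θ w) := by
      have h1 := (halign w).1
      have h2 : (∑ j, A w j * Real.cos (θ j)) = (∑ j, Real.cos (θ j)) - Real.cos (θ w) := by
        have h3 : ∀ j ∈ Finset.univ, A w j * Real.cos (θ j)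
            = Real.cos (θ j) - (if j = w then Real.cos (θ j) else 0) := by
          intro j _
          rw [hAw j]
          by_cases hj : j = w <;> simp [hj]
        rw [Finset.sum_congr rfl h3, Finset.sum_sub_distrib,
          Finset.sum_ite_eq' Finset.univ w (fun j => Real.cos (θ j))]
        simp
      rw [h2] at h1
      linear_combination h1
    have htots : (∑ j, Real.sin (θ j)) = (1 + c w) * Real.sin (θ w) := by
      have h1 := (halign w).2
      have h2 : (∑ j, A w j * Real.sin (θ j)) = (∑ j, Real.sin (θ j)) - Real.sin (θ w) := by
        have h3 : ∀ j ∈ Finset.univ, A w j * Real.sin (θ j)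
            = Real.sin (θ j) - (if j = w then Real.sin (θ j) else 0) := by
          intro j _
          rw [hAw j]
          by_cases hj : j = w <;> simp [hj]
        rw [Finset.sum_congr rfl h3, Finset.sum_sub_distrib,
          Finset.sum_ite_eq' Finset.univ w (fun j => Real.sin (θ j))]
        simp
      rw [h2] at h1
      linear_combination h1
    -- main downward induction
    have key : ∀ M : ℕ, ∀ k : Fin (m + 2), m + 1 - (k : ℕ) ≤ M →
        Real.cos (θ k) = Real.cos (θ w) ∧ Real.sin (θ k) = Real.sin (θ w) := by
      intro M
      induction M with
      | zero =>
        intro k hk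
        have hkv := k.isLt
        have hkk : ((k : Fin (m + 2)) : ℕ) = m + 1 := by omega
        have : k = w := Fin.ext (by rw [hkk, hwval])
        rw [this]
        exact ⟨rfl, rfl⟩
      | succ M ih =>
        intro k hk
        by_cases hkw : k = w
        · rw [hkw]; exact ⟨rfl, rfl⟩
        have hkval : ((k : Fin (m + 2)) : ℕ) < m + 1 := by
          have h1 := k.isLt
          have h2 : ((k : Fin (m + 2)) : ℕ) ≠ m + 1 := by
            intro hh
            exact hkw (Fin.ext (by rw [hh, hwval]))
          omega
        have hklt : k < w := by
          rw [Fin.lt_def, hwval]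
          exact hkval
        have IH : ∀ l : Fin (m + 2), k < l →
            Real.cos (θ l) = Real.cos (θ w) ∧ Real.sin (θ l) = Real.sin (θ w) := by
          intro l hl
          apply ih
          have hlv : ((k : Fin (m + 2)) : ℕ) < ((l : Fin (m + 2)) : ℕ) := hl
          have := l.isLt
          omega
        set Sle : Finset (Fin (m + 2)) := Finset.univ.filter (fun j => j ≤ k) with hSle
        set Sgt : Finset (Fin (m + 2)) := Finset.univ.filter (fun j => k < j) with hSgt
        set Dset : Finset (Fin (m + 2)) := Finset.univ.filter (fun j => k < j ∧ b j = true)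
          with hDset
        set a : ℝ := (Sgt.card : ℝ) with ha
        set Dt : ℝ := (Dset.card : ℝ) with hDt
        have hsplit : ∀ g : Fin (m + 2) → ℝ,
            ∑ j, g j = (∑ j ∈ Sle, g j) + ∑ j ∈ Sgt, g j := fun g => sum_split k g
        have hkSle : k ∈ Sle := by rw [hSle]; simp
        have hwD : w ∈ Dset := by rw [hDset]; simp [hklt, hbw]
        have hD1 : (1:ℝ) ≤ Dt := by
          rw [hDt]
          have hpos : 0 < Dset.card := Finset.card_pos.mpr ⟨w, hwD⟩
          exact_mod_cast hpos
        have hmemSgt : ∀ {j : Fin (m + 2)}, j ∈ Sgt → k < j := by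
          intro j hj
          rw [hSgt] at hj
          simpa using hj
        have hmemSle : ∀ {j : Fin (m + 2)}, j ∈ Sle → j ≤ k := by
          intro j hj
          rw [hSle] at hj
          simpa using hj
        have hfilterD : Sgt.filter (fun j => b j = true) = Dset := by
          rw [hSgt, hDset, Finset.filter_filter]
        -- sums over Sgt via IH
        have hgtc : ∑ j ∈ Sgt, Real.cos (θ j) = a * Real.cos (θ w) := by
          rw [Finset.sum_congr rfl (fun j hj => (IH j (hmemSgt hj)).1),
            Finset.sum_const, nsmul_eq_mul, ha]
        have hgts : ∑ j ∈ Sgt, Real.sin (θ j) = a * Real.sin (θ w) := by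
          rw [Finset.sum_congr rfl (fun j hj => (IH j (hmemSgt hj)).2),
            Finset.sum_const, nsmul_eq_mul, ha]
        have hlec : ∑ j ∈ Sle, Real.cos (θ j) = (1 + c w - a) * Real.cos (θ w) := by
          have hs := hsplit (fun j => Real.cos (θ j))
          linear_combination htotc - hgtc - hs
        have hles : ∑ j ∈ Sle, Real.sin (θ j) = (1 + c w - a) * Real.sin (θ w) := by
          have hs := hsplit (fun j => Real.sin (θ j))
          linear_combination htots - hgts - hs
        have hcosIH : ∀ (i : Fin (m + 2)) {j : Fin (m + 2)}, j ∈ Sgt →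
            Real.cos (θ i - θ j) = Real.cos (θ i - θ w) := by
          intro i j hj
          rw [Real.cos_sub, Real.cos_sub, (IH j (hmemSgt hj)).1, (IH j (hmemSgt hj)).2]
        have hrowgt : ∀ i : Fin (m + 2), i ≤ k →
            ∑ j ∈ Sgt, A i j * Real.cos (θ i - θ j) = Dt * Real.cos (θ i - θ w) := by
          intro i hi
          have h1 : ∀ j ∈ Sgt, A i j * Real.cos (θ i - θ j)
              = if b j = true then Real.cos (θ i - θ w) else 0 := by
            intro j hj
            rw [hA, tg_lt b (lt_of_le_of_lt hi (hmemSgt hj)), hcosIH i hj]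
            by_cases hb : b j = true <;> simp [hb]
          rw [Finset.sum_congr rfl h1, ← Finset.sum_filter, hfilterD,
            Finset.sum_const, nsmul_eq_mul, hDt]
        have hexp : ∑ i ∈ Sle, Real.cos (θ i - θ w) = 1 + c w - a := by
          have h1 : ∀ i ∈ Sle, Real.cos (θ i - θ w)
              = Real.cos (θ i) * Real.cos (θ w) + Real.sin (θ i) * Real.sin (θ w) :=
            fun i _ => Real.cos_sub _ _
          rw [Finset.sum_congr rfl h1, Finset.sum_add_distrib, ← Finset.sum_mul,
            ← Finset.sum_mul, hlec, hles]
          have hsc := Real.sin_sq_add_cos_sq (θ w)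
          linear_combination (1 + c w - a) * hsc
        -- the cut inequality
        have hcut : 0 ≤ 1 + c w - a := by
          have hq : (0:ℝ) ≤ ∑ i, ∑ j, (if i ≤ k then (1:ℝ) else 0) *
              (kHess (thresholdGraph (m + 2) b) θ i j * (if j ≤ k then (1:ℝ) else 0)) :=
            quad_nonneg' hPSD (fun j => if j ≤ k then (1:ℝ) else 0)
          have e1 : (∑ i, ∑ j, (if i ≤ k then (1:ℝ) else 0) *
              (kHess (thresholdGraph (m + 2) b) θ i j * (if j ≤ k then (1:ℝ) else 0)))
              = ∑ i ∈ Sle, ∑ j ∈ Sle, kHess (thresholdGraph (m + 2) b) θ i j := by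
            have inner : ∀ i : Fin (m + 2),
                (∑ j, (if i ≤ k then (1:ℝ) else 0) *
                  (kHess (thresholdGraph (m + 2) b) θ i j * (if j ≤ k then (1:ℝ) else 0)))
                = (if i ≤ k then (1:ℝ) else 0) *
                    ∑ j ∈ Sle, kHess (thresholdGraph (m + 2) b) θ i j := by
              intro i
              rw [← Finset.mul_sum]
              congr 1
              rw [hSle, Finset.sum_filter]
              apply Finset.sum_congr rfl
              intro j _
              by_cases hj : j ≤ k <;> simp [hj]
            rw [Finset.sum_congr rfl (fun i _ => inner i), hSle, Finset.sum_filter]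
            apply Finset.sum_congr rfl
            intro i _
            by_cases hi : i ≤ k <;> simp [hi]
          rw [e1] at hq
          have hrow : ∀ i ∈ Sle, (∑ j ∈ Sle, kHess (thresholdGraph (m + 2) b) θ i j)
              = ∑ j ∈ Sgt, A i j * Real.cos (θ i - θ j) := by
            intro i hi
            rw [← Finset.add_sum_erase Sle _ hi, hHdiag i]
            have h2 : ∑ j ∈ Sle.erase i, kHess (thresholdGraph (m + 2) b) θ i j
                = -∑ j ∈ Sle.erase i, A i j * Real.cos (θ i - θ j) := by
              rw [← Finset.sum_neg_distrib]
              apply Finset.sum_congr rfl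
              intro j hj
              exact hHoff i j (Finset.mem_erase.mp hj).1.symm
            rw [h2]
            have h3 : ∑ j ∈ Sle.erase i, A i j * Real.cos (θ i - θ j)
                = ∑ j ∈ Sle, A i j * Real.cos (θ i - θ j) := by
              apply Finset.sum_erase
              rw [hA, tg_diag b i, zero_mul]
            rw [h3]
            have h4 : (∑ j, A i j * Real.cos (θ i - θ j)) = c i := by
              rw [hc]
            have h5 := hsplit (fun j => A i j * Real.cos (θ i - θ j))
            linear_combination h5 - h4
          have e2 : (∑ i ∈ Sle, ∑ j ∈ Sle, kHess (thresholdGraph (m + 2) b) θ i j)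
              = Dt * (1 + c w - a) := by
            rw [Finset.sum_congr rfl hrow,
              Finset.sum_congr rfl (fun i hi => hrowgt i (hmemSle hi)),
              ← Finset.mul_sum, hexp]
          rw [e2] at hq
          nlinarith [hq, hD1]
        -- the alignment equations for k
        have hXk := (halign k).1
        have hYk := (halign k).2
        have hsC := hsplit (fun j => A k j * Real.cos (θ j))
        have hsS := hsplit (fun j => A k j * Real.sin (θ j))
        have t2c : ∑ j ∈ Sgt, A k j * Real.cos (θ j) = Dt * Real.cos (θ w) := by
          have h1 : ∀ j ∈ Sgt, A k j * Real.cos (θ j)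
              = if b j = true then Real.cos (θ w) else 0 := by
            intro j hj
            rw [hA, tg_lt b (hmemSgt hj), (IH j (hmemSgt hj)).1]
            by_cases hb : b j = true <;> simp [hb]
          rw [Finset.sum_congr rfl h1, ← Finset.sum_filter, hfilterD,
            Finset.sum_const, nsmul_eq_mul, hDt]
        have t2s : ∑ j ∈ Sgt, A k j * Real.sin (θ j) = Dt * Real.sin (θ w) := by
          have h1 : ∀ j ∈ Sgt, A k j * Real.sin (θ j)
              = if b j = true then Real.sin (θ w) else 0 := by
            intro j hj
            rw [hA, tg_lt b (hmemSgt hj), (IH j (hmemSgt hj)).2]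
            by_cases hb : b j = true <;> simp [hb]
          rw [Finset.sum_congr rfl h1, ← Finset.sum_filter, hfilterD,
            Finset.sum_const, nsmul_eq_mul, hDt]
        by_cases hbk : b k = true
        · -- dominating vertex
          have t1c : ∑ j ∈ Sle, A k j * Real.cos (θ j)
              = (∑ j ∈ Sle, Real.cos (θ j)) - Real.cos (θ k) := by
            have h1 : ∀ j ∈ Sle, A k j * Real.cos (θ j)
                = Real.cos (θ j) - (if j = k then Real.cos (θ j) else 0) := by
              intro j hj
              by_cases hcase : j = k
              · rw [hcase, hA, tg_diag b k]; simp
              · have hlt : j < k := lt_of_le_of_ne (hmemSle hj) hcase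
                rw [hA, tg_gt b hlt, if_pos hbk, if_neg hcase]; ring
            rw [Finset.sum_congr rfl h1, Finset.sum_sub_distrib,
              Finset.sum_ite_eq' Sle k (fun j => Real.cos (θ j)), if_pos hkSle]
          have t1s : ∑ j ∈ Sle, A k j * Real.sin (θ j)
              = (∑ j ∈ Sle, Real.sin (θ j)) - Real.sin (θ k) := by
            have h1 : ∀ j ∈ Sle, A k j * Real.sin (θ j)
                = Real.sin (θ j) - (if j = k then Real.sin (θ j) else 0) := by
              intro j hj
              by_cases hcase : j = k
              · rw [hcase, hA, tg_diag b k]; simp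
              · have hlt : j < k := lt_of_le_of_ne (hmemSle hj) hcase
                rw [hA, tg_gt b hlt, if_pos hbk, if_neg hcase]; ring
            rw [Finset.sum_congr rfl h1, Finset.sum_sub_distrib,
              Finset.sum_ite_eq' Sle k (fun j => Real.sin (θ j)), if_pos hkSle]
          have e1 : (c k + 1) * Real.cos (θ k) = (1 + c w - a + Dt) * Real.cos (θ w) := by
            linear_combination (-1) * hXk + hsC + t1c + t2c + hlec
          have e2 : (c k + 1) * Real.sin (θ k) = (1 + c w - a + Dt) * Real.sin (θ w) := by
            linear_combination (-1) * hYk + hsS + t1s + t2s + hles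
          exact unify' (c k + 1) (1 + c w - a + Dt) _ _ _ _
            (by linarith [hcnn k]) (by linarith [hcut, hD1])
            (Real.sin_sq_add_cos_sq (θ k)) (Real.sin_sq_add_cos_sq (θ w)) e1 e2
        · -- isolated vertex
          have t1c : ∑ j ∈ Sle, A k j * Real.cos (θ j) = 0 := by
            apply Finset.sum_eq_zero
            intro j hj
            by_cases hcase : j = k
            · rw [hcase, hA, tg_diag b k, zero_mul]
            · have hlt : j < k := lt_of_le_of_ne (hmemSle hj) hcase
              rw [hA, tg_gt b hlt, if_neg hbk, zero_mul]
          have t1s : ∑ j ∈ Sle, A k j * Real.sin (θ j) = 0 := by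
            apply Finset.sum_eq_zero
            intro j hj
            by_cases hcase : j = k
            · rw [hcase, hA, tg_diag b k, zero_mul]
            · have hlt : j < k := lt_of_le_of_ne (hmemSle hj) hcase
              rw [hA, tg_gt b hlt, if_neg hbk, zero_mul]
          have e1 : c k * Real.cos (θ k) = Dt * Real.cos (θ w) := by
            linear_combination (-1) * hXk + hsC + t1c + t2c
          have e2 : c k * Real.sin (θ k) = Dt * Real.sin (θ w) := by
            linear_combination (-1) * hYk + hsS + t1s + t2s
          exact unify' (c k) Dt _ _ _ _ (hcnn k) (by linarith [hD1])
            (Real.sin_sq_add_cos_sq (θ k)) (Real.sin_sq_add_cos_sq (θ w)) e1 e2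
    intro i j
    have hi := key (m + 2) i (by omega)
    have hj := key (m + 2) j (by omega)
    simp [phasor, Prod.ext_iff, hi.1, hi.2, hj.1, hj.2]
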